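/- (Theorem 4.2(iii), pointwise form.) Let ū be a minimizer of G over U_∞ and suppose I^+ ≠ ∅. Then for every i ∈ I^+ one has ū_i ∈ {0, −ρ_i·sgn(φ_i)}, and there exists at least one i ∈ I^+ with ū_i ≠ 0 (i.e., max_{i ∈ I^+} |ū_i| ≠ 0). -/

import Mathlib

open Real Set

section AuxLemmas

private lemma two_rpow_superadd {a b r : ℝ} (ha : 0 ≤ a) (hb : 0 ≤ b) (hr : 1 ≤ r) :
    a ^ r + b ^ r ≤ (a + b) ^ r := by
  have hr0 : (0:ℝ) < r := lt_of_lt_of_le one_pos hr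
  rcases eq_or_lt_of_le ha with h | ha'
  · simp [← h, Real.zero_rpow hr0.ne']
  rcases eq_or_lt_of_le hb with h | hb'
  · simp [← h, Real.zero_rpow hr0.ne']
  have hab : (0:ℝ) < a + b := by linarith
  have e1 : a ^ r = a * a ^ (r - 1) := by
    nth_rewrite 1 [show r = 1 + (r-1) by ring]
    rw [Real.rpow_add ha', Real.rpow_one]
  have e2 : b ^ r = b * b ^ (r - 1) := by
    nth_rewrite 1 [show r = 1 + (r-1) by ring]
    rw [Real.rpow_add hb', Real.rpow_one]
  have e3 : (a + b) ^ r = (a + b) * (a + b) ^ (r - 1) := by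
    nth_rewrite 1 [show r = 1 + (r-1) by ring]
    rw [Real.rpow_add hab, Real.rpow_one]
  have h1 : a ^ (r-1) ≤ (a+b) ^ (r-1) :=
    Real.rpow_le_rpow ha (by linarith) (by linarith)
  have h2 : b ^ (r-1) ≤ (a+b) ^ (r-1) :=
    Real.rpow_le_rpow hb (by linarith) (by linarith)
  rw [e1, e2, e3]
  nlinarith [Real.rpow_nonneg ha (r-1), Real.rpow_nonneg hb (r-1)]

private lemma sum_rpow_le_rpow_sum {ι : Type*} (s : Finset ι) (f : ι → ℝ) {r : ℝ}
    (hf : ∀ i ∈ s, 0 ≤ f i) (hr : 1 ≤ r) :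
    ∑ i ∈ s, (f i) ^ r ≤ (∑ i ∈ s, f i) ^ r := by
  classical
  have hr0 : (0:ℝ) < r := lt_of_lt_of_le one_pos hr
  induction s using Finset.induction with
  | empty => simp [Real.zero_rpow hr0.ne']
  | insert _ _ hnotmem ih =>
    rename_i a t
    rw [Finset.sum_insert hnotmem, Finset.sum_insert hnotmem]
    have hft : ∀ i ∈ t, 0 ≤ f i := fun i hi => hf i (Finset.mem_insert_of_mem hi)
    have h1 := ih hft
    have h2 : (f a) ^ r + (∑ i ∈ t, f i) ^ r ≤ (f a + ∑ i ∈ t, f i) ^ r :=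
      two_rpow_superadd (hf a (Finset.mem_insert_self a t))
        (Finset.sum_nonneg hft) hr
    linarith

private lemma key_anti {p r A x y : ℝ} (hp0 : 0 < p) (hp1 : p < 1) (hr : 1 ≤ r)
    (hpr : p * r ≤ 1) (hA : 0 ≤ A) (hx : 0 < x) (hxy : x < y)
    (hcase : p * r < 1 ∨ 0 < A) :
    y ^ (p-1) * (A + y ^ p) ^ (r-1) < x ^ (p-1) * (A + x ^ p) ^ (r-1) := by
  have hy : 0 < y := hx.trans hxy
  set u := x ^ p with hu_def
  set v := y ^ p with hv_def
  have hu : 0 < u := Real.rpow_pos_of_pos hx p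
  have hv : 0 < v := Real.rpow_pos_of_pos hy p
  have huv : u < v := Real.rpow_lt_rpow hx.le hxy hp0
  have ex : x ^ (p-1) = u ^ ((p-1)/p) := by
    rw [hu_def, ← Real.rpow_mul hx.le]
    congr 1
    field_simp
  have ey : y ^ (p-1) = v ^ ((p-1)/p) := by
    rw [hv_def, ← Real.rpow_mul hy.le]
    congr 1
    field_simp
  rw [ex, ey]
  set c := (p-1)/p with hc_def
  set b := r - 1 with hb_def
  have hb : 0 ≤ b := by simp [hb_def]; linarith
  have ident : ∀ w : ℝ, 0 < w → w ^ c * (A + w) ^ b = w ^ (c+b) * ((A+w)/w) ^ b := by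
    intro w hw
    have h1 : A + w = w * ((A+w)/w) := by field_simp
    have h2 : (A + w) ^ b = w ^ b * ((A+w)/w) ^ b := by
      nth_rewrite 1 [h1]
      exact Real.mul_rpow hw.le (by positivity)
    rw [h2, ← mul_assoc, ← Real.rpow_add hw]
  rw [ident u hu, ident v hv]
  have hBu : (0:ℝ) < (A+u)/u := by positivity
  have hBv : (0:ℝ) < (A+v)/v := by positivity
  have hBle : (A+v)/v ≤ (A+u)/u := by
    rw [div_le_div_iff₀ hv hu]
    nlinarith
  rcases lt_or_eq_of_le hpr with hlt | heq
  · have hcb' : c + b < 0 := by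
      rw [hc_def, hb_def]
      have : (p-1)/p + (r-1) = (p*r - 1)/p := by field_simp; ring
      rw [this]
      apply div_neg_of_neg_of_pos <;> linarith
    have h1 : v ^ (c+b) < u ^ (c+b) := Real.rpow_lt_rpow_of_neg hu huv hcb'
    have h2 : ((A+v)/v) ^ b ≤ ((A+u)/u) ^ b := Real.rpow_le_rpow hBv.le hBle hb
    have h4 : (0:ℝ) < ((A+u)/u) ^ b := Real.rpow_pos_of_pos hBu b
    calc v ^ (c+b) * ((A+v)/v) ^ b ≤ v ^ (c+b) * ((A+u)/u) ^ b := by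
          apply mul_le_mul_of_nonneg_left h2 (Real.rpow_nonneg hv.le _)
      _ < u ^ (c+b) * ((A+u)/u) ^ b := by
          apply mul_lt_mul_of_pos_right h1 h4
  · have hApos : 0 < A := hcase.resolve_left (by rw [heq]; exact lt_irrefl 1)
    have hcb0 : c + b = 0 := by
      rw [hc_def, hb_def]
      field_simp
      nlinarith
    have hbpos : 0 < b := by
      rw [hb_def]
      have : r = 1/p := by field_simp; nlinarith
      rw [this, lt_sub_iff_add_lt, zero_add, lt_div_iff₀ hp0, one_mul]
      exact hp1
    have hBlt : (A+v)/v < (A+u)/u := by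
      rw [div_lt_div_iff₀ hv hu]
      nlinarith
    rw [hcb0, Real.rpow_zero, Real.rpow_zero, one_mul, one_mul]
    exact Real.rpow_lt_rpow hBv.le hBlt hbpos

private lemma strictConcaveOn_g {p r A : ℝ} (hp0 : 0 < p) (hp1 : p < 1) (hr : 1 ≤ r)
    (hpr : p * r ≤ 1) (hA : 0 ≤ A) (hcase : p * r < 1 ∨ 0 < A) :
    StrictConcaveOn ℝ (Set.Ici (0:ℝ)) (fun t => (A + t ^ p) ^ r) := by
  have hcont : Continuous (fun t : ℝ => (A + t ^ p) ^ r) := by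
    have h1 : Continuous (fun t : ℝ => t ^ p) :=
      Real.continuous_rpow_const hp0.le
    have h2 : Continuous (fun t : ℝ => A + t ^ p) := continuous_const.add h1
    exact (Real.continuous_rpow_const (by linarith)).comp h2
  apply StrictAntiOn.strictConcaveOn_of_deriv (convex_Ici 0) hcont.continuousOn
  rw [interior_Ici]
  have hderiv : ∀ t ∈ Set.Ioi (0:ℝ),
      deriv (fun t : ℝ => (A + t ^ p) ^ r) t
        = (p * t ^ (p-1)) * r * (A + t ^ p) ^ (r-1) := by
    intro t ht
    have ht' : (0:ℝ) < t := ht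
    have hbase : 0 < A + t ^ p := by
      have := Real.rpow_pos_of_pos ht' p
      linarith
    have h1 : HasDerivAt (fun s : ℝ => s ^ p) (p * t ^ (p-1)) t :=
      Real.hasDerivAt_rpow_const (Or.inl ht'.ne')
    have h2 : HasDerivAt (fun s : ℝ => A + s ^ p) (p * t ^ (p-1)) t :=
      h1.const_add A
    exact (h2.rpow_const (p := r) (Or.inl hbase.ne')).deriv
  intro x hx y hy hxy
  rw [hderiv x hx, hderiv y hy]
  have hx' : (0:ℝ) < x := hx
  have hkey := key_anti hp0 hp1 hr hpr hA hx' hxy hcase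
  have hprpos : 0 < p * r := by positivity
  nlinarith

private lemma chord_lt {p r A τ ρ : ℝ} (hp0 : 0 < p) (hp1 : p < 1) (hr : 1 ≤ r)
    (hpr : p * r ≤ 1) (hA : 0 ≤ A) (hcase : p * r < 1 ∨ 0 < A)
    (hτ : 0 < τ) (hτρ : τ < ρ) :
    (1 - τ/ρ) * A ^ r + (τ/ρ) * (A + ρ ^ p) ^ r < (A + τ ^ p) ^ r := by
  have hρ : 0 < ρ := hτ.trans hτρ
  have hconc := strictConcaveOn_g (A := A) hp0 hp1 hr hpr hA hcase
  have ha : 0 < 1 - τ/ρ := by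
    rw [sub_pos, div_lt_one hρ]; exact hτρ
  have hb : 0 < τ/ρ := div_pos hτ hρ
  have h := hconc.2 (Set.mem_Ici.2 le_rfl) (Set.mem_Ici.2 hρ.le)
    (ne_of_lt hρ) ha hb (by ring)
  have harg : (1 - τ/ρ) • (0:ℝ) + (τ/ρ) • ρ = τ := by
    simp [smul_eq_mul]
    field_simp
  rw [harg] at h
  simpa [smul_eq_mul, Real.zero_rpow hp0.ne'] using h

end AuxLemmas

/-- The pointwise Hamiltonian `G(u) = Σ φ_i u_i + γ (Σ |u_i|^p)^{q/p}`. -/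
noncomputable def Gfun (m : ℕ) (p q γ : ℝ) (φ : Fin m → ℝ) (u : Fin m → ℝ) : ℝ :=
  ∑ i, φ i * u i + γ * (∑ i, |u i| ^ p) ^ (q / p)

private lemma Gfun_update (m : ℕ) (p q γ : ℝ) (φ ub : Fin m → ℝ) (i : Fin m) (t : ℝ) :
    Gfun m p q γ φ (Function.update ub i t)
      = φ i * t + (∑ k ∈ Finset.univ.erase i, φ k * ub k)
        + γ * (|t| ^ p + ∑ k ∈ Finset.univ.erase i, |ub k| ^ p) ^ (q / p) := by
  classical
  unfold Gfun
  have e1 : ∀ k, φ k * Function.update ub i t k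
      = Function.update (fun k => φ k * ub k) i (φ i * t) k := by
    intro k
    by_cases h : k = i
    · subst h; simp
    · simp [Function.update_apply, h]
  have e2 : ∀ k, |Function.update ub i t k| ^ p
      = Function.update (fun k => |ub k| ^ p) i (|t| ^ p) k := by
    intro k
    by_cases h : k = i
    · subst h; simp
    · simp [Function.update_apply, h]
  rw [Finset.sum_congr rfl (fun k _ => e1 k), Finset.sum_congr rfl (fun k _ => e2 k),
    Finset.sum_update_of_mem (Finset.mem_univ i), Finset.sum_update_of_mem (Finset.mem_univ i)]
  simp [Finset.sdiff_singleton_eq_erase]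

set_option maxHeartbeats 1000000 in
theorem minimizer_bang_off_bang_on_Iplus
    (m : ℕ) (hm : 1 ≤ m) (p q γ : ℝ) (hp0 : 0 < p) (hp1 : p < 1)
    (hpq : p ≤ q) (hq1 : q ≤ 1) (hγ : 0 < γ)
    (φ ρ : Fin m → ℝ) (hρ : ∀ i, 0 < ρ i)
    (ub : Fin m → ℝ) (hub : ∀ i, |ub i| ≤ ρ i)
    (hmin : ∀ u : Fin m → ℝ, (∀ i, |u i| ≤ ρ i) → Gfun m p q γ φ ub ≤ Gfun m p q γ φ u)
    (hIplus : ∃ j, γ < |φ j| * ρ j ^ (1 - q)) :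
    (∀ i, γ < |φ i| * ρ i ^ (1 - q) →
      ub i = 0 ∨ ub i = -ρ i * Real.sign (φ i)) ∧
    (∃ i, γ < |φ i| * ρ i ^ (1 - q) ∧ ub i ≠ 0) := by
  classical
  have hr1 : 1 ≤ q / p := (one_le_div hp0).2 hpq
  have hprq : p * (q / p) = q := by field_simp
  have hpr : p * (q / p) ≤ 1 := by rw [hprq]; exact hq1
  have hφne : ∀ i, γ < |φ i| * ρ i ^ (1 - q) → φ i ≠ 0 := by
    intro i hi h
    rw [h] at hi
    simp at hi
    exact absurd hi (not_lt.2 hγ.le)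
  constructor
  · -- Part A
    intro i hi
    have hρi := hρ i
    have hφi := hφne i hi
    by_cases h0 : ub i = 0
    · exact Or.inl h0
    right
    set B := ∑ k ∈ Finset.univ.erase i, φ k * ub k with hB_def
    set A := ∑ k ∈ Finset.univ.erase i, |ub k| ^ p with hA_def
    have hA0 : 0 ≤ A :=
      Finset.sum_nonneg fun k _ => Real.rpow_nonneg (abs_nonneg _) p
    have hGub : Gfun m p q γ φ ub
        = φ i * ub i + B + γ * (|ub i| ^ p + A) ^ (q/p) := by
      conv_lhs => rw [← Function.update_eq_self i ub]
      exact Gfun_update m p q γ φ ub i (ub i)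
    have hcmp : ∀ t, |t| ≤ ρ i →
        φ i * ub i + γ * (|ub i| ^ p + A) ^ (q/p)
          ≤ φ i * t + γ * (|t| ^ p + A) ^ (q/p) := by
      intro t ht
      have hbd : ∀ k, |Function.update ub i t k| ≤ ρ k := by
        intro k
        by_cases h : k = i
        · subst h; simpa using ht
        · simpa [Function.update_apply, h] using hub k
      have h := hmin (Function.update ub i t) hbd
      rw [hGub, Gfun_update m p q γ φ ub i t] at h
      linarith
    -- the sign of ub i is opposite to that of φ i
    have hsign_neg : φ i * ub i < 0 := by
      have h := hcmp (-(ub i)) (by rw [abs_neg]; exact hub i)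
      rw [abs_neg] at h
      have h2 : φ i * ub i ≤ 0 := by nlinarith
      rcases lt_or_eq_of_le h2 with h3 | h3
      · exact h3
      · rcases mul_eq_zero.mp h3 with h4 | h4
        · exact absurd h4 hφi
        · exact absurd h4 h0
    set τ := |ub i| with hτ_def
    have hτpos : 0 < τ := abs_pos.2 h0
    have hτle : τ ≤ ρ i := hub i
    have hmul : φ i * ub i = -(|φ i| * τ) := by
      rw [hτ_def, ← abs_mul]
      have := abs_of_neg hsign_neg
      linarith
    have hτeq : τ = ρ i := by
      by_contra hne
      have hτlt : τ < ρ i := lt_of_le_of_ne hτle hne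
      -- comparison with t = 0
      have h1 := hcmp 0 (by simpa using hρi.le)
      rw [hmul] at h1
      simp only [mul_zero, abs_zero, Real.zero_rpow hp0.ne', zero_add] at h1
      -- comparison with t = -(sign (φ i)) * ρ i
      have hsignabs : |Real.sign (φ i)| = 1 := by
        rcases Real.sign_apply_eq_of_ne_zero _ hφi with h | h <;> simp [h]
      have hφsgn : φ i * Real.sign (φ i) = |φ i| := by
        rcases lt_trichotomy (φ i) 0 with h | h | h
        · rw [Real.sign_of_neg h, abs_of_neg h]; ring
        · exact absurd h hφi
        · rw [Real.sign_of_pos h, abs_of_pos h]; ring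
      set t2 := -(Real.sign (φ i)) * ρ i with ht2_def
      have ht2abs : |t2| = ρ i := by
        rw [ht2_def, abs_mul, abs_neg, hsignabs, one_mul, abs_of_pos hρi]
      have ht2lin : φ i * t2 = -(|φ i| * ρ i) := by
        rw [ht2_def, ← hφsgn]; ring
      have h2 := hcmp t2 (le_of_eq ht2abs)
      rw [hmul, ht2abs, ht2lin] at h2
      -- rewrite |ub i| as τ is already done by `set`
      by_cases hcase : p * (q/p) < 1 ∨ 0 < A
      · have hchord := chord_lt hp0 hp1 hr1 hpr hA0 hcase hτpos hτlt
        have hc := mul_lt_mul_of_pos_left hchord hγ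
        have hlam : |φ i| * (τ / ρ i * ρ i) = |φ i| * τ := by
          rw [div_mul_cancel₀ _ hρi.ne']
        have hone : τ / ρ i < 1 := (div_lt_one hρi).2 hτlt
        have hcomm1 : τ ^ p + A = A + τ ^ p := by ring
        have hcomm2 : ρ i ^ p + A = A + ρ i ^ p := by ring
        rw [hcomm1] at h1 h2
        rw [hcomm2] at h2
        nlinarith [mul_le_mul_of_nonneg_left h1
            (by linarith : (0:ℝ) ≤ 1 - τ / ρ i),
          mul_le_mul_of_nonneg_left h2 (by positivity : (0:ℝ) ≤ τ / ρ i), hlam]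
      · push_neg at hcase
        have hq_eq : q = 1 := le_antisymm hq1 (by
          have := hcase.1
          rw [hprq] at this
          linarith)
        have hA_eq : A = 0 := le_antisymm hcase.2 hA0
        have hτq : (τ ^ p) ^ (q/p) = τ := by
          rw [← Real.rpow_mul hτpos.le, hprq, hq_eq, Real.rpow_one]
        have hρq : (ρ i ^ p) ^ (q/p) = ρ i := by
          rw [← Real.rpow_mul hρi.le, hprq, hq_eq, Real.rpow_one]
        rw [hA_eq, add_zero, add_zero, hτq, hρq] at h2
        have hFγ : γ < |φ i| := by
          rw [hq_eq] at hi
          simpa using hi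
        linarith [mul_pos (sub_pos.2 hFγ) (sub_pos.2 hτlt)]
    -- conclude
    rcases lt_trichotomy (φ i) 0 with h | h | h
    · rw [Real.sign_of_neg h]
      have hub_pos : 0 < ub i := by
        by_contra h'
        push_neg at h'
        linarith [mul_nonneg (neg_nonneg.2 h.le) (neg_nonneg.2 h')]
      have heq : ub i = ρ i := by
        rw [← abs_of_pos hub_pos, ← hτ_def, hτeq]
      rw [heq]; ring
    · exact absurd h hφi
    · rw [Real.sign_of_pos h]
      have hub_neg : ub i < 0 := by
        by_contra h'
        push_neg at h'
        linarith [mul_nonneg h.le h']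
      have heq : -ub i = ρ i := by
        rw [← abs_of_neg hub_neg, ← hτ_def, hτeq]
      linarith
  · -- Part B
    obtain ⟨j, hj⟩ := hIplus
    have hφj := hφne j hj
    have hρj := hρ j
    have hsignabsj : |Real.sign (φ j)| = 1 := by
      rcases Real.sign_apply_eq_of_ne_zero _ hφj with h | h <;> simp [h]
    have hφsgnj : φ j * Real.sign (φ j) = |φ j| := by
      rcases lt_trichotomy (φ j) 0 with h | h | h
      · rw [Real.sign_of_neg h, abs_of_neg h]; ring
      · exact absurd h hφj
      · rw [Real.sign_of_pos h, abs_of_pos h]; ring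
    set e : Fin m → ℝ := fun k => if k = j then -ρ j * Real.sign (φ j) else 0 with he_def
    have habs2 : |(-ρ j) * Real.sign (φ j)| = ρ j := by
      rw [abs_mul, abs_neg, abs_of_pos hρj, hsignabsj, mul_one]
    have he_bd : ∀ k, |e k| ≤ ρ k := by
      intro k
      by_cases h : k = j
      · subst h
        simp only [he_def, if_pos rfl]
        rw [habs2]
      · simp [he_def, h, (hρ k).le]
    have hsum1 : ∑ k, φ k * e k = -(|φ j| * ρ j) := by
      rw [Finset.sum_eq_single j]
      · have : φ j * ((-ρ j) * Real.sign (φ j)) = -(|φ j| * ρ j) := by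
          rw [← hφsgnj]; ring
        simpa [he_def] using this
      · intro k _ hk
        simp [he_def, hk]
      · intro h
        exact absurd (Finset.mem_univ j) h
    have hsum2 : ∑ k, |e k| ^ p = ρ j ^ p := by
      rw [Finset.sum_eq_single j]
      · simp only [he_def, if_pos rfl]
        rw [habs2]
      · intro k _ hk
        simp [he_def, hk, Real.zero_rpow hp0.ne']
      · intro h
        exact absurd (Finset.mem_univ j) h
    have hGe : Gfun m p q γ φ e = -(|φ j| * ρ j) + γ * ρ j ^ q := by
      unfold Gfun
      rw [hsum1, hsum2, ← Real.rpow_mul hρj.le, hprq]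
    have hGneg : Gfun m p q γ φ e < 0 := by
      rw [hGe]
      have hkey : γ * ρ j ^ q < |φ j| * ρ j := by
        have h := mul_lt_mul_of_pos_right hj (Real.rpow_pos_of_pos hρj q)
        calc γ * ρ j ^ q < |φ j| * ρ j ^ (1-q) * ρ j ^ q := h
          _ = |φ j| * ρ j := by
              rw [mul_assoc, ← Real.rpow_add hρj]
              norm_num
      linarith
    have hub_lt : Gfun m p q γ φ ub < 0 := (hmin e he_bd).trans_lt hGneg
    by_contra hcon
    push_neg at hcon
    have hterm : ∀ i : Fin m, 0 ≤ φ i * ub i + γ * (|ub i| ^ p) ^ (q/p) := by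
      intro i
      by_cases h0 : ub i = 0
      · simp [h0, Real.zero_rpow hp0.ne',
          Real.zero_rpow (ne_of_gt (lt_of_lt_of_le one_pos hr1))]
      · have hi' : ¬ (γ < |φ i| * ρ i ^ (1-q)) := fun h => h0 (hcon i h)
        rw [not_lt] at hi'
        have hu : 0 < |ub i| := abs_pos.2 h0
        have e4 : (|ub i| ^ p) ^ (q/p) = |ub i| ^ q := by
          rw [← Real.rpow_mul hu.le, hprq]
        have hcoef : |φ i| ≤ γ * ρ i ^ (q-1) := by
          have h := mul_le_mul_of_nonneg_right hi'
            (Real.rpow_nonneg (hρ i).le (q-1))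
          calc |φ i| = |φ i| * (ρ i ^ (1-q) * ρ i ^ (q-1)) := by
                rw [← Real.rpow_add (hρ i)]
                norm_num
            _ = |φ i| * ρ i ^ (1-q) * ρ i ^ (q-1) := by ring
            _ ≤ γ * ρ i ^ (q-1) := h
        have hmono : ρ i ^ (q-1) ≤ |ub i| ^ (q-1) :=
          Real.rpow_le_rpow_of_nonpos hu (hub i) (by linarith)
        have hq_split : |ub i| ^ (q-1) * |ub i| = |ub i| ^ q := by
          have h' : |ub i| ^ ((q-1)+1) = |ub i| ^ (q-1) * |ub i| := by
            rw [Real.rpow_add hu, Real.rpow_one]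
          rw [show (q-1)+1 = q by ring] at h'
          exact h'.symm
        have hchain : |φ i| * |ub i| ≤ γ * |ub i| ^ q := by
          calc |φ i| * |ub i| ≤ γ * ρ i ^ (q-1) * |ub i| :=
                mul_le_mul_of_nonneg_right hcoef hu.le
            _ ≤ γ * |ub i| ^ (q-1) * |ub i| := by
                apply mul_le_mul_of_nonneg_right _ hu.le
                exact mul_le_mul_of_nonneg_left hmono hγ.le
            _ = γ * |ub i| ^ q := by rw [mul_assoc, hq_split]
        have habs : -(|φ i| * |ub i|) ≤ φ i * ub i := by
          rw [← abs_mul]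
          exact neg_abs_le _
        rw [e4]
        linarith
    have hsumnn : 0 ≤ ∑ i, (φ i * ub i + γ * (|ub i| ^ p) ^ (q/p)) :=
      Finset.sum_nonneg fun i _ => hterm i
    have hsuper : ∑ i, (|ub i| ^ p) ^ (q/p) ≤ (∑ i, |ub i| ^ p) ^ (q/p) :=
      sum_rpow_le_rpow_sum _ _ (fun i _ => Real.rpow_nonneg (abs_nonneg _) p) hr1
    have hnn : 0 ≤ Gfun m p q γ φ ub := by
      unfold Gfun
      rw [Finset.sum_add_distrib, ← Finset.mul_sum] at hsumnn
      have := mul_le_mul_of_nonneg_left hsuper hγ.le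
      linarith
    linarith
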